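/- Let A ≪ B in 𝕀ℝ, let F : 𝕀_{[A,B]} → 𝕀ℝ be a bounded interval function, and let 𝒫', 𝒫 be partitions of 𝕀_{[A,B]}. If 𝒫' is finer than 𝒫 (𝒫' ⪯ 𝒫, i.e., 𝒫 ⊆ 𝒫'), then σ(F,𝒫) ≤ σ(F,𝒫') ≤ Σ(F,𝒫') ≤ Σ(F,𝒫) in the Kulisch–Miranker order. -/

import Mathlib

/-- `𝕀ℝ`: the set of nonempty closed bounded real intervals, identified with
pairs `(lo, hi) ∈ ℝ × ℝ` with `lo ≤ hi`.  The subtype order inherited from the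
product order on `ℝ × ℝ` is exactly the Kulisch–Miranker order, and the
inherited metric (sup metric of `ℝ × ℝ`) is exactly the Moore metric `d_M`. -/
abbrev IR : Type := {p : ℝ × ℝ // p.1 ≤ p.2}

namespace IR

/-- Left endpoint projection `π₁`. -/
def lo (A : IR) : ℝ := A.val.1

/-- Right endpoint projection `π₂`. -/
def hi (A : IR) : ℝ := A.val.2

/-- The strict Kulisch–Miranker order `A ≪ B`. -/
def sll (A B : IR) : Prop := lo A < lo B ∧ hi A < hi B

/-- The Moore metric `d_M`. -/
noncomputable def dM (A B : IR) : ℝ := max |lo B - lo A| |hi B - hi A|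

/-- `𝕀_{[A,B]} = {X ∈ 𝕀ℝ : A ≤ X ≤ B}`. -/
def box (A B : IR) : Set IR := {X : IR | A ≤ X ∧ X ≤ B}

/-- The interval `[u,v]` (with a junk degenerate value if `u > v`). -/
noncomputable def mkI (u v : ℝ) : IR := if h : u ≤ v then ⟨(u, v), h⟩ else ⟨(u, u), le_rfl⟩

/-- The point `A + t(B - A)` on the segment from `A` to `B`. -/
noncomputable def seg (A B : IR) (t : ℝ) : IR :=
  mkI (lo A + t * (lo B - lo A)) (hi A + t * (hi B - hi A))

/-- Componentwise infimum of a set of intervals, as a pair of reals. -/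
noncomputable def infS (S : Set IR) : ℝ × ℝ := (sInf (lo '' S), sInf (hi '' S))

/-- Componentwise supremum of a set of intervals, as a pair of reals. -/
noncomputable def supS (S : Set IR) : ℝ × ℝ := (sSup (lo '' S), sSup (hi '' S))

/-- A partition `A = P₀ ≪ P₁ ≪ ⋯ ≪ P_N = B` of `𝕀_{[A,B]}`, described by its
parameters `0 = t₀ < t₁ < ⋯ < t_N = 1` (so that `P_k = A + t_k (B - A)`). -/
structure Partition where
  n : ℕ
  npos : 0 < n
  t : ℕ → ℝ
  t0 : t 0 = 0
  tn : t n = 1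
  mono : ∀ i < n, t i < t (i + 1)

/-- The set of parameters of a partition. -/
def Partition.pts (P : Partition) : Set ℝ := P.t '' Set.Iic P.n

/-- The set of points `P_k = A + t_k(B-A)` of a partition of `𝕀_{[A,B]}`. -/
noncomputable def Partition.ipts (A B : IR) (P : Partition) : Set IR :=
  (fun i => seg A B (P.t i)) '' Set.Iic P.n

/-- Lower Riemann sum `σ(F, 𝒫)` (as a pair of reals; interval sums are
componentwise and `λ • [u,v] = [λu, λv]` for the scalars `λ = d_M ≥ 0`). -/
noncomputable def lowerSum (A B : IR) (F : IR → IR) (P : Partition) : ℝ × ℝ :=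
  ∑ k ∈ Finset.range P.n,
    dM (seg A B (P.t k)) (seg A B (P.t (k + 1))) •
      infS (F '' box (seg A B (P.t k)) (seg A B (P.t (k + 1))))

/-- Upper Riemann sum `Σ(F, 𝒫)`. -/
noncomputable def upperSum (A B : IR) (F : IR → IR) (P : Partition) : ℝ × ℝ :=
  ∑ k ∈ Finset.range P.n,
    dM (seg A B (P.t k)) (seg A B (P.t (k + 1))) •
      supS (F '' box (seg A B (P.t k)) (seg A B (P.t (k + 1))))

/-- The lower integral `∫̲_A^B F(X)dX`: componentwise supremum of the lower
Riemann sums over all partitions. -/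
noncomputable def lowerInt (A B : IR) (F : IR → IR) : ℝ × ℝ :=
  (sSup (Set.range fun P : Partition => (lowerSum A B F P).1),
   sSup (Set.range fun P : Partition => (lowerSum A B F P).2))

/-- The upper integral `∫̄_A^B F(X)dX`: componentwise infimum of the upper
Riemann sums over all partitions. -/
noncomputable def upperInt (A B : IR) (F : IR → IR) : ℝ × ℝ :=
  (sInf (Set.range fun P : Partition => (upperSum A B F P).1),
   sInf (Set.range fun P : Partition => (upperSum A B F P).2))

/-- `F` is bounded on `𝕀_{[A,B]}` (order bounded, equivalently metrically
bounded). -/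
def BoundedOn (F : IR → IR) (A B : IR) : Prop :=
  ∃ C D : IR, ∀ X ∈ box A B, C ≤ F X ∧ F X ≤ D

end IR
namespace IRRefine
open IR Finset

lemma le_iff (X Y : IR) : X ≤ Y ↔ lo X ≤ lo Y ∧ hi X ≤ hi Y := Iff.rfl

lemma lo_le_hi (X : IR) : lo X ≤ hi X := X.prop

section Seg
variable (A B : IR) (h : sll A B)

/-- the Moore diameter scale -/
noncomputable def L : ℝ := max (lo B - lo A) (hi B - hi A)

lemma L_pos (h : sll A B) : 0 < L A B := lt_max_of_lt_left (by linarith [h.1])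

lemma seg_cond {t : ℝ} (ht : t ∈ Set.Icc (0:ℝ) 1) :
    lo A + t * (lo B - lo A) ≤ hi A + t * (hi B - hi A) := by
  have h1 := lo_le_hi A; have h2 := lo_le_hi B
  nlinarith [ht.1, ht.2]

lemma seg_lo {t : ℝ} (ht : t ∈ Set.Icc (0:ℝ) 1) :
    lo (seg A B t) = lo A + t * (lo B - lo A) := by
  rw [seg, mkI, dif_pos (seg_cond A B ht)]; rfl

lemma seg_hi {t : ℝ} (ht : t ∈ Set.Icc (0:ℝ) 1) :
    hi (seg A B t) = hi A + t * (hi B - hi A) := by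
  rw [seg, mkI, dif_pos (seg_cond A B ht)]; rfl

lemma seg_zero : seg A B 0 = A := by
  have : lo A + 0 * (lo B - lo A) ≤ hi A + 0 * (hi B - hi A) := by
    simpa using lo_le_hi A
  rw [seg, mkI, dif_pos this]
  apply Subtype.ext; apply Prod.ext <;> simp [lo, hi]

lemma seg_one : seg A B 1 = B := by
  have : lo A + 1 * (lo B - lo A) ≤ hi A + 1 * (hi B - hi A) := by
    simpa using lo_le_hi B
  rw [seg, mkI, dif_pos this]
  apply Subtype.ext; apply Prod.ext <;> simp [lo, hi]

variable {A B}

lemma seg_mono (h : sll A B) {s u : ℝ} (hs : s ∈ Set.Icc (0:ℝ) 1)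
    (hu : u ∈ Set.Icc (0:ℝ) 1) (hsu : s ≤ u) : seg A B s ≤ seg A B u := by
  rw [le_iff, seg_lo A B hs, seg_lo A B hu, seg_hi A B hs, seg_hi A B hu]
  constructor <;> nlinarith [h.1, h.2]

lemma seg_inj (h : sll A B) {s u : ℝ} (hs : s ∈ Set.Icc (0:ℝ) 1)
    (hu : u ∈ Set.Icc (0:ℝ) 1) (he : seg A B s = seg A B u) : s = u := by
  have := congrArg lo he
  rw [seg_lo A B hs, seg_lo A B hu] at this
  have h1 := h.1
  have : s * (lo B - lo A) = u * (lo B - lo A) := by linarith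
  exact mul_right_cancel₀ (by linarith) this

lemma dM_seg (h : sll A B) {s u : ℝ} (hs : s ∈ Set.Icc (0:ℝ) 1)
    (hu : u ∈ Set.Icc (0:ℝ) 1) (hsu : s ≤ u) :
    dM (seg A B s) (seg A B u) = (u - s) * L A B := by
  rw [dM, seg_lo A B hs, seg_lo A B hu, seg_hi A B hs, seg_hi A B hu]
  have e1 : lo A + u * (lo B - lo A) - (lo A + s * (lo B - lo A))
      = (u - s) * (lo B - lo A) := by ring
  have e2 : hi A + u * (hi B - hi A) - (hi A + s * (hi B - hi A))
      = (u - s) * (hi B - hi A) := by ring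
  rw [e1, e2, abs_of_nonneg (by nlinarith [h.1]), abs_of_nonneg (by nlinarith [h.2]),
    L, mul_max_of_nonneg _ _ (by linarith)]

end Seg

section Part
open IR.Partition

lemma Pt_mono (P : Partition) : ∀ {i j : ℕ}, i ≤ j → j ≤ P.n → P.t i ≤ P.t j := by
  intro i j hij hj
  induction j with
  | zero => simp_all
  | succ m ih =>
    rcases Nat.lt_or_ge i (m+1) with hlt | hge
    · have him : i ≤ m := Nat.lt_succ_iff.mp hlt
      have := P.mono m (by omega)
      exact le_trans (ih him (by omega)) (le_of_lt this)
    · have : i = m + 1 := le_antisymm hij hge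
      simp [this]

lemma Pt_strict (P : Partition) {i j : ℕ} (hij : i < j) (hj : j ≤ P.n) :
    P.t i < P.t j := by
  have h1 := P.mono i (by omega)
  exact lt_of_lt_of_le h1 (Pt_mono P hij hj)

lemma Pt_mem (P : Partition) {i : ℕ} (hi : i ≤ P.n) : P.t i ∈ Set.Icc (0:ℝ) 1 := by
  constructor
  · rw [← P.t0]; exact Pt_mono P (Nat.zero_le i) hi
  · rw [← P.tn]; exact Pt_mono P hi le_rfl

end Part

section Tele

lemma tele_sum (f : ℕ → ℝ) : ∀ {a b : ℕ}, a ≤ b →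
    ∑ j ∈ Finset.Ico a b, (f (j+1) - f j) = f b - f a := by
  intro a b hab
  induction b with
  | zero =>
    have ha : a = 0 := by omega
    subst ha; simp
  | succ m ih =>
    rcases Nat.lt_or_ge a (m+1) with hlt | hge
    · have ham : a ≤ m := by omega
      rw [Finset.sum_Ico_succ_top ham, ih ham]; ring
    · have : a = m + 1 := by omega
      simp [this]

end Tele
end IRRefine
namespace IRRefine
open IR Finset

section Boxes
variable {A B : IR}

lemma box_subset (h : sll A B) {s s' u' u : ℝ}
    (hs : s ∈ Set.Icc (0:ℝ) 1) (hu : u ∈ Set.Icc (0:ℝ) 1)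
    (hs' : s' ∈ Set.Icc (0:ℝ) 1) (hu' : u' ∈ Set.Icc (0:ℝ) 1)
    (h1 : s ≤ s') (h2 : u' ≤ u) :
    box (seg A B s') (seg A B u') ⊆ box (seg A B s) (seg A B u) := fun X hX =>
  ⟨le_trans (seg_mono h hs hs' h1) hX.1, le_trans hX.2 (seg_mono h hu' hu h2)⟩

lemma box_sub_AB (h : sll A B) {s u : ℝ}
    (hs : s ∈ Set.Icc (0:ℝ) 1) (hu : u ∈ Set.Icc (0:ℝ) 1) :
    box (seg A B s) (seg A B u) ⊆ box A B := by
  intro X hX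
  refine ⟨?_, ?_⟩
  · have h0 := seg_mono h (Set.mem_Icc.mpr ⟨le_rfl, zero_le_one⟩) hs hs.1
    rw [seg_zero] at h0; exact le_trans h0 hX.1
  · have h1 := seg_mono h hu (Set.mem_Icc.mpr ⟨zero_le_one, le_rfl⟩) hu.2
    rw [seg_one] at h1; exact le_trans hX.2 h1

lemma box_nonempty (h : sll A B) {s u : ℝ}
    (hs : s ∈ Set.Icc (0:ℝ) 1) (hu : u ∈ Set.Icc (0:ℝ) 1) (hsu : s ≤ u) :
    (box (seg A B s) (seg A B u)).Nonempty :=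
  ⟨seg A B s, le_rfl, seg_mono h hs hu hsu⟩

lemma img_ne (h : sll A B) (F : IR → IR) (π : IR → ℝ) {s u : ℝ}
    (hs : s ∈ Set.Icc (0:ℝ) 1) (hu : u ∈ Set.Icc (0:ℝ) 1) (hsu : s ≤ u) :
    (π '' (F '' box (seg A B s) (seg A B u))).Nonempty :=
  ((box_nonempty h hs hu hsu).image F).image π

lemma img_bddBelow (h : sll A B) (F : IR → IR) (π : IR → ℝ) (c : ℝ)
    (hbd : ∀ X ∈ box A B, c ≤ π (F X)) {s u : ℝ}
    (hs : s ∈ Set.Icc (0:ℝ) 1) (hu : u ∈ Set.Icc (0:ℝ) 1) :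
    BddBelow (π '' (F '' box (seg A B s) (seg A B u))) := by
  refine ⟨c, ?_⟩
  rintro y ⟨Y, ⟨X, hX, rfl⟩, rfl⟩
  exact hbd X (box_sub_AB h hs hu hX)

lemma img_bddAbove (h : sll A B) (F : IR → IR) (π : IR → ℝ) (d : ℝ)
    (hbd : ∀ X ∈ box A B, π (F X) ≤ d) {s u : ℝ}
    (hs : s ∈ Set.Icc (0:ℝ) 1) (hu : u ∈ Set.Icc (0:ℝ) 1) :
    BddAbove (π '' (F '' box (seg A B s) (seg A B u))) := by
  refine ⟨d, ?_⟩
  rintro y ⟨Y, ⟨X, hX, rfl⟩, rfl⟩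
  exact hbd X (box_sub_AB h hs hu hX)

lemma sInf_mono_box (h : sll A B) (F : IR → IR) (π : IR → ℝ) (c : ℝ)
    (hbd : ∀ X ∈ box A B, c ≤ π (F X))
    {s s' u' u : ℝ} (h0 : 0 ≤ s) (h1 : s ≤ s') (h2 : s' ≤ u') (h3 : u' ≤ u) (h4 : u ≤ 1) :
    sInf (π '' (F '' box (seg A B s) (seg A B u)))
      ≤ sInf (π '' (F '' box (seg A B s') (seg A B u'))) := by
  have hs : s ∈ Set.Icc (0:ℝ) 1 := ⟨h0, by linarith⟩
  have hu : u ∈ Set.Icc (0:ℝ) 1 := ⟨by linarith, h4⟩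
  have hs' : s' ∈ Set.Icc (0:ℝ) 1 := ⟨by linarith, by linarith⟩
  have hu' : u' ∈ Set.Icc (0:ℝ) 1 := ⟨by linarith, by linarith⟩
  exact csInf_le_csInf (img_bddBelow h F π c hbd hs hu)
    (img_ne h F π hs' hu' h2)
    (Set.image_mono (Set.image_mono (box_subset h hs hu hs' hu' h1 h3)))

lemma sSup_mono_box (h : sll A B) (F : IR → IR) (π : IR → ℝ) (d : ℝ)
    (hbd : ∀ X ∈ box A B, π (F X) ≤ d)
    {s s' u' u : ℝ} (h0 : 0 ≤ s) (h1 : s ≤ s') (h2 : s' ≤ u') (h3 : u' ≤ u) (h4 : u ≤ 1) :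
    sSup (π '' (F '' box (seg A B s') (seg A B u')))
      ≤ sSup (π '' (F '' box (seg A B s) (seg A B u))) := by
  have hs : s ∈ Set.Icc (0:ℝ) 1 := ⟨h0, by linarith⟩
  have hu : u ∈ Set.Icc (0:ℝ) 1 := ⟨by linarith, h4⟩
  have hs' : s' ∈ Set.Icc (0:ℝ) 1 := ⟨by linarith, by linarith⟩
  have hu' : u' ∈ Set.Icc (0:ℝ) 1 := ⟨by linarith, by linarith⟩
  exact csSup_le_csSup (img_bddAbove h F π d hbd hs hu)
    (img_ne h F π hs' hu' h2)
    (Set.image_mono (Set.image_mono (box_subset h hs hu hs' hu' h1 h3)))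

end Boxes

/-- The key combinatorial refinement estimate, abstracted over the "value"
`v s u` assigned to a subinterval `[s,u] ⊆ [0,1]`. -/
lemma refine_le {A B : IR} (h : sll A B) (P' P : Partition)
    (hfine : Partition.ipts A B P ⊆ Partition.ipts A B P')
    (v : ℝ → ℝ → ℝ)
    (hv : ∀ s s' u' u : ℝ, 0 ≤ s → s ≤ s' → s' ≤ u' → u' ≤ u → u ≤ 1 → v s u ≤ v s' u') :
    ∑ k ∈ Finset.range P.n, (P.t (k+1) - P.t k) * L A B * v (P.t k) (P.t (k+1))
      ≤ ∑ j ∈ Finset.range P'.n, (P'.t (j+1) - P'.t j) * L A B * v (P'.t j) (P'.t (j+1)) := by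
  classical
  have hex : ∀ i, ∃ j, i ≤ P.n → j ≤ P'.n ∧ P'.t j = P.t i := by
    intro i
    by_cases hi : i ≤ P.n
    · have hm : seg A B (P.t i) ∈ Partition.ipts A B P := ⟨i, hi, rfl⟩
      obtain ⟨j, hj, hje⟩ := hfine hm
      exact ⟨j, fun _ => ⟨hj, seg_inj h (Pt_mem P' hj) (Pt_mem P hi) hje⟩⟩
    · exact ⟨0, fun hc => absurd hc hi⟩
  choose J hJ using hex
  have hJle : ∀ i, i ≤ P.n → J i ≤ P'.n := fun i hi => (hJ i hi).1
  have hJt : ∀ i, i ≤ P.n → P'.t (J i) = P.t i := fun i hi => (hJ i hi).2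
  have hJmono : ∀ i i', i < i' → i' ≤ P.n → J i < J i' := by
    intro i i' hii hi'
    by_contra hc
    push_neg at hc
    have h1 : P'.t (J i') ≤ P'.t (J i) := Pt_mono P' hc (hJle i (by omega))
    rw [hJt i (by omega), hJt i' hi'] at h1
    exact absurd h1 (not_le.mpr (Pt_strict P hii hi'))
  have hJ0 : J 0 = 0 := by
    by_contra hc
    have h0 : 0 < J 0 := Nat.pos_of_ne_zero hc
    have hlt := Pt_strict P' h0 (hJle 0 (Nat.zero_le _))
    rw [hJt 0 (Nat.zero_le _), P.t0, P'.t0] at hlt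
    exact lt_irrefl 0 hlt
  have hJn : J P.n = P'.n := by
    by_contra hc
    have hlt' : J P.n < P'.n := lt_of_le_of_ne (hJle P.n le_rfl) hc
    have hlt := Pt_strict P' hlt' le_rfl
    rw [hJt P.n le_rfl, P.tn, P'.tn] at hlt
    exact lt_irrefl 1 hlt
  set f : ℕ → ℝ := fun j => (P'.t (j+1) - P'.t j) * L A B * v (P'.t j) (P'.t (j+1)) with hf
  have hdec : ∀ m, m ≤ P.n → ∑ j ∈ Finset.range (J m), f j
      = ∑ k ∈ Finset.range m, ∑ j ∈ Finset.Ico (J k) (J (k+1)), f j := by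
    intro m
    induction m with
    | zero => intro _; simp [hJ0]
    | succ m ih =>
      intro hm
      rw [Finset.sum_range_succ, ← ih (by omega), Finset.range_eq_Ico, Finset.range_eq_Ico]
      exact (Finset.sum_Ico_consecutive f (Nat.zero_le _)
        (le_of_lt (hJmono m (m+1) (by omega) hm))).symm
  calc ∑ k ∈ Finset.range P.n, (P.t (k+1) - P.t k) * L A B * v (P.t k) (P.t (k+1))
      ≤ ∑ k ∈ Finset.range P.n, ∑ j ∈ Finset.Ico (J k) (J (k+1)), f j := by
        apply Finset.sum_le_sum
        intro k hk
        have hkn : k < P.n := Finset.mem_range.mp hk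
        have hk1 : k + 1 ≤ P.n := hkn
        have hJk1 : J (k+1) ≤ P'.n := hJle (k+1) hk1
        have htele : ∑ j ∈ Finset.Ico (J k) (J (k+1)), (P'.t (j+1) - P'.t j)
            = P'.t (J (k+1)) - P'.t (J k) :=
          tele_sum P'.t (le_of_lt (hJmono k (k+1) (by omega) hk1))
        have hsplit : (P.t (k+1) - P.t k) * L A B * v (P.t k) (P.t (k+1))
            = ∑ j ∈ Finset.Ico (J k) (J (k+1)),
                (P'.t (j+1) - P'.t j) * (L A B * v (P.t k) (P.t (k+1))) := by
          rw [← Finset.sum_mul, htele, hJt k (by omega), hJt (k+1) hk1]; ring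
        rw [hsplit]
        apply Finset.sum_le_sum
        intro j hj
        obtain ⟨hj1, hj2⟩ := Finset.mem_Ico.mp hj
        have hjn : j < P'.n := lt_of_lt_of_le hj2 hJk1
        have e1 : P.t k ≤ P'.t j := by
          rw [← hJt k (by omega)]; exact Pt_mono P' hj1 (by omega)
        have e2 : P'.t j ≤ P'.t (j+1) := le_of_lt (P'.mono j hjn)
        have e3 : P'.t (j+1) ≤ P.t (k+1) := by
          rw [← hJt (k+1) hk1]; exact Pt_mono P' hj2 hJk1
        have hb0 : (0:ℝ) ≤ P.t k := (Pt_mem P (by omega : k ≤ P.n)).1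
        have hb1 : P.t (k+1) ≤ 1 := (Pt_mem P hk1).2
        have key : v (P.t k) (P.t (k+1)) ≤ v (P'.t j) (P'.t (j+1)) :=
          hv _ _ _ _ hb0 e1 e2 e3 hb1
        have hfac : 0 ≤ (P'.t (j+1) - P'.t j) * L A B :=
          mul_nonneg (by linarith) (le_of_lt (L_pos A B h))
        calc (P'.t (j+1) - P'.t j) * (L A B * v (P.t k) (P.t (k+1)))
            = (P'.t (j+1) - P'.t j) * L A B * v (P.t k) (P.t (k+1)) := by ring
          _ ≤ (P'.t (j+1) - P'.t j) * L A B * v (P'.t j) (P'.t (j+1)) :=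
            mul_le_mul_of_nonneg_left key hfac
    _ = ∑ j ∈ Finset.range P'.n, f j := by rw [← hJn, hdec P.n le_rfl]
end IRRefine

open Finset IRRefine


open IR in
/-- Let `A ≪ B`, `F : 𝕀_{[A,B]} → 𝕀ℝ` bounded, and `𝒫', 𝒫` partitions of
`𝕀_{[A,B]}`.  If `𝒫'` is finer than `𝒫` (`𝒫' ⪯ 𝒫`, i.e. `𝒫 ⊆ 𝒫'` as sets of
points), then `σ(F,𝒫) ≤ σ(F,𝒫') ≤ Σ(F,𝒫') ≤ Σ(F,𝒫)`. -/
theorem IR.refine_sums (A B : IR) (h : sll A B) (F : IR → IR)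
    (hF : BoundedOn F A B) (P' P : Partition)
    (hfine : Partition.ipts A B P ⊆ Partition.ipts A B P') :
    lowerSum A B F P ≤ lowerSum A B F P' ∧
    lowerSum A B F P' ≤ upperSum A B F P' ∧
    upperSum A B F P' ≤ upperSum A B F P := by
  classical
  obtain ⟨C, D, hCD⟩ := hF
  have hloC : ∀ X ∈ box A B, lo C ≤ lo (F X) := fun X hX => ((le_iff _ _).1 (hCD X hX).1).1
  have hhiC : ∀ X ∈ box A B, hi C ≤ hi (F X) := fun X hX => ((le_iff _ _).1 (hCD X hX).1).2
  have hloD : ∀ X ∈ box A B, lo (F X) ≤ lo D := fun X hX => ((le_iff _ _).1 (hCD X hX).2).1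
  have hhiD : ∀ X ∈ box A B, hi (F X) ≤ hi D := fun X hX => ((le_iff _ _).1 (hCD X hX).2).2
  have ecoef : ∀ (Q : Partition) (k : ℕ), k < Q.n →
      dM (seg A B (Q.t k)) (seg A B (Q.t (k+1))) = (Q.t (k+1) - Q.t k) * L A B := by
    intro Q k hk
    exact dM_seg h (Pt_mem Q (by omega)) (Pt_mem Q hk) (le_of_lt (Q.mono k hk))
  have elow1 : ∀ Q : Partition, (lowerSum A B F Q).1 =
      ∑ k ∈ Finset.range Q.n, (Q.t (k+1) - Q.t k) * L A B *
        sInf (lo '' (F '' box (seg A B (Q.t k)) (seg A B (Q.t (k+1))))) := by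
    intro Q; rw [lowerSum, Prod.fst_sum]
    exact Finset.sum_congr rfl fun k hk => by rw [ecoef Q k (Finset.mem_range.mp hk)]; rfl
  have elow2 : ∀ Q : Partition, (lowerSum A B F Q).2 =
      ∑ k ∈ Finset.range Q.n, (Q.t (k+1) - Q.t k) * L A B *
        sInf (hi '' (F '' box (seg A B (Q.t k)) (seg A B (Q.t (k+1))))) := by
    intro Q; rw [lowerSum, Prod.snd_sum]
    exact Finset.sum_congr rfl fun k hk => by rw [ecoef Q k (Finset.mem_range.mp hk)]; rfl
  have eup1 : ∀ Q : Partition, (upperSum A B F Q).1 =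
      ∑ k ∈ Finset.range Q.n, (Q.t (k+1) - Q.t k) * L A B *
        sSup (lo '' (F '' box (seg A B (Q.t k)) (seg A B (Q.t (k+1))))) := by
    intro Q; rw [upperSum, Prod.fst_sum]
    exact Finset.sum_congr rfl fun k hk => by rw [ecoef Q k (Finset.mem_range.mp hk)]; rfl
  have eup2 : ∀ Q : Partition, (upperSum A B F Q).2 =
      ∑ k ∈ Finset.range Q.n, (Q.t (k+1) - Q.t k) * L A B *
        sSup (hi '' (F '' box (seg A B (Q.t k)) (seg A B (Q.t (k+1))))) := by
    intro Q; rw [upperSum, Prod.snd_sum]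
    exact Finset.sum_congr rfl fun k hk => by rw [ecoef Q k (Finset.mem_range.mp hk)]; rfl
  -- middle inequality, componentwise for a generic projection
  have middle : ∀ (Q : Partition) (π : IR → ℝ) (c d : ℝ),
      (∀ X ∈ box A B, c ≤ π (F X)) → (∀ X ∈ box A B, π (F X) ≤ d) →
      ∑ k ∈ Finset.range Q.n, (Q.t (k+1) - Q.t k) * L A B *
        sInf (π '' (F '' box (seg A B (Q.t k)) (seg A B (Q.t (k+1)))))
      ≤ ∑ k ∈ Finset.range Q.n, (Q.t (k+1) - Q.t k) * L A B *
        sSup (π '' (F '' box (seg A B (Q.t k)) (seg A B (Q.t (k+1))))) := by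
    intro Q π c d hc hd
    apply Finset.sum_le_sum
    intro k hk
    have hkn := Finset.mem_range.mp hk
    have hs := Pt_mem Q (le_of_lt hkn)
    have hu := Pt_mem Q hkn
    have hsu : Q.t k ≤ Q.t (k+1) := le_of_lt (Q.mono k hkn)
    have hfac : 0 ≤ (Q.t (k+1) - Q.t k) * L A B :=
      mul_nonneg (by linarith) (le_of_lt (L_pos A B h))
    exact mul_le_mul_of_nonneg_left
      (csInf_le_csSup (img_ne h F π hs hu hsu) (img_bddBelow h F π c hc hs hu)
        (img_bddAbove h F π d hd hs hu)) hfac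
  refine ⟨?_, ?_, ?_⟩
  · rw [Prod.le_def]
    constructor
    · rw [elow1 P, elow1 P']
      exact refine_le h P' P hfine _
        (fun s s' u' u h0 h1 h2 h3 h4 => sInf_mono_box h F lo (lo C) hloC h0 h1 h2 h3 h4)
    · rw [elow2 P, elow2 P']
      exact refine_le h P' P hfine _
        (fun s s' u' u h0 h1 h2 h3 h4 => sInf_mono_box h F hi (hi C) hhiC h0 h1 h2 h3 h4)
  · rw [Prod.le_def]
    constructor
    · rw [elow1 P', eup1 P']
      exact middle P' lo (lo C) (lo D) hloC hloD
    · rw [elow2 P', eup2 P']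
      exact middle P' hi (hi C) (hi D) hhiC hhiD
  · rw [Prod.le_def]
    constructor
    · rw [eup1 P, eup1 P']
      have hneg := refine_le h P' P hfine
        (fun s u => -(sSup (lo '' (F '' box (seg A B s) (seg A B u)))))
        (fun s s' u' u h0 h1 h2 h3 h4 =>
          neg_le_neg (sSup_mono_box h F lo (lo D) hloD h0 h1 h2 h3 h4))
      simp only [mul_neg, Finset.sum_neg_distrib, neg_le_neg_iff] at hneg
      exact hneg
    · rw [eup2 P, eup2 P']
      have hneg := refine_le h P' P hfine
        (fun s u => -(sSup (hi '' (F '' box (seg A B s) (seg A B u)))))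
        (fun s s' u' u h0 h1 h2 h3 h4 =>
          neg_le_neg (sSup_mono_box h F hi (hi D) hhiD h0 h1 h2 h3 h4))
      simp only [mul_neg, Finset.sum_neg_distrib, neg_le_neg_iff] at hneg
      exact hneg
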